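/- In a Euclidean triangle inscribed with two vertices z₀, z_k on a circle of center z_* and radius R, and third vertex z_{k+1}, if the angle at z_{k+1} satisfies ε ≤ ∠z₀z_{k+1}z_k ≤ π − ε and the central angle satisfies ∠z₀z_*z_k < 2ε, then (1/2)∠z₀z_*z_k < ∠z₀z_{k+1}z_k < π − (1/2)∠z₀z_*z_k; consequently z_{k+1} lies strictly outside the closed disc bounded by the circle on the major-arc side, i.e., z_{k+1} is not inside the circle and not on the minor arc side of the chord z₀z_k. -/

import Mathlib

open Real EuclideanGeometry

lemma nsq (z : ℂ) : ‖z‖^2 = z.re^2 + z.im^2 := by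
  rw [Complex.sq_norm, Complex.normSq_apply] ; ring

lemma rinner (z w : ℂ) : (inner ℝ z w : ℝ) = z.re*w.re + z.im*w.im := by
  rw [Complex.inner, Complex.mul_re]
  simp [Complex.conj_re, Complex.conj_im]
  ring

lemma key_alg (S N w q t : ℝ) (hS : 0 < S) (ht : 0 < t) (hin : w + 2*t < S)
    (hpar : w * (S*N) = q^2 * N + t^2 * S) (hN : 0 ≤ N) :
    N * ((S + w)^2 - 4*q^2) < (S + N) * (S - w)^2 := by
  have h1 : (0:ℝ) < S - w - 2*t := by linarith
  have h2 : (0:ℝ) < S - w + 2*t := by linarith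
  nlinarith [mul_pos hS (mul_pos h1 h2), hpar, mul_pos hS (mul_pos ht ht)]

lemma parseval (z1 z2 v1 v2 n1 n2 S : ℝ) (hS : S = v1^2+v2^2) (hS0 : S ≠ 0)
    (hd : v1*n1 + v2*n2 = 0) :
    (z1^2+z2^2)*((v1^2+v2^2)*(n1^2+n2^2)) =
      (z1*v1+z2*v2)^2*(n1^2+n2^2) + (z1*n1+z2*n2)^2*(v1^2+v2^2) := by
  have h2 : ((z1^2+z2^2)*((v1^2+v2^2)*(n1^2+n2^2)))*(v1^2+v2^2) =
      ((z1*v1+z2*v2)^2*(n1^2+n2^2) + (z1*n1+z2*n2)^2*(v1^2+v2^2))*(v1^2+v2^2) := by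
    linear_combination (2*(z1*v1+z2*v2)*(v1*n2-v2*n1)*(z1*v2-z2*v1)
      + ((z1*v2-z2*v1)^2-(z1*v1+z2*v2)^2)*(v1*n1+v2*n2)) * hd
  have hv : (v1^2+v2^2) ≠ 0 := by rw [← hS] ; exact hS0
  exact mul_right_cancel₀ hv h2

set_option maxHeartbeats 2000000 in
theorem stmt17 (z0 zk zk1 zstar : ℂ) (R ε : ℝ) (hR : 0 < R)
    (hε : ε ∈ Set.Ioo 0 (π / 2))
    (hon0 : dist z0 zstar = R) (honk : dist zk zstar = R) (hne : z0 ≠ zk)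
    (hangle1 : ε ≤ ∠ z0 zk1 zk) (hangle2 : ∠ z0 zk1 zk ≤ π - ε)
    (hcentral : ∠ z0 zstar zk < 2 * ε) :
    (∠ z0 zstar zk) / 2 < ∠ z0 zk1 zk ∧
    ∠ z0 zk1 zk < π - (∠ z0 zstar zk) / 2 ∧
    ¬(dist zk1 zstar < R ∧
        (affineSpan ℝ ({z0, zk} : Set ℂ)).SOppSide zk1 zstar) := by
  obtain ⟨hε0, hεπ⟩ := hε
  have hγ0 : 0 ≤ ∠ z0 zstar zk := angle_nonneg _ _ _
  have hγπ : ∠ z0 zstar zk ≤ π := angle_le_pi _ _ _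
  have h1 : (∠ z0 zstar zk) / 2 < ∠ z0 zk1 zk := by linarith
  have h2 : ∠ z0 zk1 zk < π - (∠ z0 zstar zk) / 2 := by linarith
  refine ⟨h1, h2, ?_⟩
  rintro ⟨hin, hopp⟩
  -- set up coordinates
  obtain ⟨v, hv⟩ : ∃ v : ℂ, v = (zk - z0) / 2 := ⟨_, rfl⟩
  obtain ⟨m, hm⟩ : ∃ m : ℂ, m = (z0 + zk) / 2 := ⟨_, rfl⟩
  obtain ⟨n, hn⟩ : ∃ n : ℂ, n = m - zstar := ⟨_, rfl⟩
  obtain ⟨p, hp⟩ : ∃ p : ℂ, p = zk1 - m := ⟨_, rfl⟩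
  obtain ⟨S, hS⟩ : ∃ S : ℝ, S = v.re^2 + v.im^2 := ⟨_, rfl⟩
  obtain ⟨N, hNdef⟩ : ∃ N : ℝ, N = n.re^2 + n.im^2 := ⟨_, rfl⟩
  obtain ⟨w, hw⟩ : ∃ w : ℝ, w = p.re^2 + p.im^2 := ⟨_, rfl⟩
  obtain ⟨q, hq⟩ : ∃ q : ℝ, q = v.re*p.re + v.im*p.im := ⟨_, rfl⟩
  obtain ⟨t, ht⟩ : ∃ t : ℝ, t = p.re*n.re + p.im*n.im := ⟨_, rfl⟩
  -- squared distance hypotheses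
  have e0 : (z0.re - zstar.re)^2 + (z0.im - zstar.im)^2 = R^2 := by
    have h : ‖z0 - zstar‖^2 = R^2 := by rw [← dist_eq_norm, hon0]
    rw [nsq] at h
    simpa only [Complex.sub_re, Complex.sub_im] using h
  have ek : (zk.re - zstar.re)^2 + (zk.im - zstar.im)^2 = R^2 := by
    have h : ‖zk - zstar‖^2 = R^2 := by rw [← dist_eq_norm, honk]
    rw [nsq] at h
    simpa only [Complex.sub_re, Complex.sub_im] using h
  have ein : (zk1.re - zstar.re)^2 + (zk1.im - zstar.im)^2 < R^2 := by
    have h0 : (0:ℝ) ≤ dist zk1 zstar := dist_nonneg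
    have h : ‖zk1 - zstar‖^2 < R^2 := by
      rw [← dist_eq_norm]; nlinarith [hin]
    rw [nsq] at h
    simpa only [Complex.sub_re, Complex.sub_im] using h
  have hvn : v.re*n.re + v.im*n.im = 0 := by
    subst hv hn hm
    simp only [ Complex.div_re, Complex.div_im, Complex.sub_re, Complex.sub_im,
      Complex.add_re, Complex.add_im, Complex.normSq_apply, Complex.re_ofNat, Complex.im_ofNat]
    linear_combination (ek - e0)/4
  have hSN : S + N = R^2 := by
    subst hS hNdef hv hn hm
    simp only [ Complex.div_re, Complex.div_im, Complex.sub_re,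
      Complex.sub_im, Complex.add_re, Complex.add_im, Complex.normSq_apply,
      Complex.re_ofNat, Complex.im_ofNat]
    linear_combination (e0 + ek)/2
  have hvne : v ≠ 0 := by
    rw [hv, div_ne_zero_iff]
    exact ⟨sub_ne_zero.mpr (Ne.symm hne), two_ne_zero⟩
  have hS0 : 0 < S := by
    have h := Complex.normSq_pos.mpr hvne
    rw [Complex.normSq_apply] at h
    nlinarith [h]
  have hizz : (z0 - zstar).re*(zk - zstar).re + (z0 - zstar).im*(zk - zstar).im = N - S := by
    subst hS hNdef hv hn hm
    simp only [Complex.div_re, Complex.div_im, Complex.sub_re, Complex.sub_im,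
      Complex.add_re, Complex.add_im, Complex.normSq_apply, Complex.re_ofNat, Complex.im_ofNat]
    ring
  have hcosγ : Real.cos (∠ z0 zstar zk) = (N - S)/R^2 := by
    rw [EuclideanGeometry.angle, InnerProductGeometry.cos_angle]
    have h1 : ‖z0 -ᵥ zstar‖ = R := by rw [vsub_eq_sub, ← dist_eq_norm, hon0]
    have h2 : ‖zk -ᵥ zstar‖ = R := by rw [vsub_eq_sub, ← dist_eq_norm, honk]
    rw [h1, h2, vsub_eq_sub, vsub_eq_sub, rinner, hizz]
    ring
  have hγltπ : ∠ z0 zstar zk < π := by linarith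
  have hR2 : (0:ℝ) < R^2 := by positivity
  have hN0 : 0 < N := by
    by_contra hcon
    push_neg at hcon
    have hNz : N = 0 := le_antisymm hcon (by rw [hNdef]; positivity)
    have hlt := Real.cos_lt_cos_of_nonneg_of_le_pi hγ0 le_rfl hγltπ
    rw [Real.cos_pi, hcosγ, hNz] at hlt
    rw [hNz] at hSN
    have heq : (0 - S)/R^2 = -1 := by field_simp; linarith
    rw [heq] at hlt
    linarith
  have hcoshalf : Real.cos (∠ z0 zstar zk / 2) = Real.sqrt N / R := by
    rw [Real.cos_half (by linarith) hγπ, hcosγ]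
    have he : (1 + (N - S)/R^2)/2 = N/R^2 := by
      rw [show S = R^2 - N by linarith]
      field_simp
      ring
    rw [he, Real.sqrt_div hN0.le, Real.sqrt_sq hR.le]
  -- extract positivity of t from SOppSide
  obtain ⟨⟨p₁, hp₁, p₂, hp₂, hray⟩, hns1, hns2⟩ := hopp
  have hx0 : zk1 -ᵥ p₁ ≠ 0 := fun h => hns1 (vsub_eq_zero_iff_eq.mp h ▸ hp₁)
  have hy0 : p₂ -ᵥ zstar ≠ 0 := fun h => hns2 (vsub_eq_zero_iff_eq.mp h ▸ hp₂)
  obtain ⟨r₁, r₂, hr₁, hr₂, hre⟩ := hray.exists_pos hx0 hy0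
  obtain ⟨c₁, hc₁⟩ : ∃ c : ℝ, p₁ - z0 = c • (zk - z0) := by
    have h := AffineSubspace.vsub_mem_direction hp₁ (left_mem_affineSpan_pair ℝ z0 zk)
    rw [direction_affineSpan, vectorSpan_pair_rev] at h
    obtain ⟨c, hc⟩ := Submodule.mem_span_singleton.1 h
    exact ⟨c, hc.symm⟩
  obtain ⟨c₂, hc₂⟩ : ∃ c : ℝ, p₂ - z0 = c • (zk - z0) := by
    have h := AffineSubspace.vsub_mem_direction hp₂ (left_mem_affineSpan_pair ℝ z0 zk)
    rw [direction_affineSpan, vectorSpan_pair_rev] at h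
    obtain ⟨c, hc⟩ := Submodule.mem_span_singleton.1 h
    exact ⟨c, hc.symm⟩
  have hkey : r₁ * t = r₂ * N := by
    have hRe := congrArg Complex.re hre
    have hIm := congrArg Complex.im hre
    have hc1R := congrArg Complex.re hc₁
    have hc1I := congrArg Complex.im hc₁
    have hc2R := congrArg Complex.re hc₂
    have hc2I := congrArg Complex.im hc₂
    subst ht hNdef hp hn hm hv
    simp only [vsub_eq_sub, Complex.smul_re, Complex.smul_im, smul_eq_mul, Complex.sub_re,
      Complex.sub_im, Complex.add_re, Complex.add_im, Complex.div_re, Complex.div_im,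
      Complex.normSq_apply, Complex.re_ofNat, Complex.im_ofNat] at hRe hIm hc1R hc1I hc2R hc2I hvn ⊢
    linear_combination ((z0.re + zk.re)/2 - zstar.re) * hRe +
      ((z0.im + zk.im)/2 - zstar.im) * hIm +
      r₁*((z0.re + zk.re)/2 - zstar.re)*hc1R + r₁*((z0.im + zk.im)/2 - zstar.im)*hc1I +
      r₂*((z0.re + zk.re)/2 - zstar.re)*hc2R + r₂*((z0.im + zk.im)/2 - zstar.im)*hc2I +
      (r₁*(2*c₁-1) + r₂*(2*c₂-1))*hvn
  have ht0 : 0 < t := by nlinarith only [mul_pos hr₂ hN0, hkey, hr₁]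
  have hwin : w + 2*t + N = (zk1.re - zstar.re)^2 + (zk1.im - zstar.im)^2 := by
    subst hw ht hNdef hp hn hm
    simp only [Complex.sub_re, Complex.sub_im, Complex.add_re, Complex.add_im,
      Complex.div_re, Complex.div_im, Complex.normSq_apply, Complex.re_ofNat, Complex.im_ofNat]
    ring
  have hwt : w + 2*t < S := by linarith only [ein, hSN, hwin]
  have hpar : w * (S*N) = q^2*N + t^2*S := by
    have hPar := parseval p.re p.im v.re v.im n.re n.im S hS (ne_of_gt hS0) hvn
    rw [hw, hq, ht, hS, hNdef]
    linear_combination hPar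
  have hka := key_alg S N w q t hS0 ht0 hwt hpar hN0.le
  obtain ⟨a, ha⟩ : ∃ a : ℝ, a = ‖z0 - zk1‖ := ⟨_, rfl⟩
  obtain ⟨b, hb⟩ : ∃ b : ℝ, b = ‖zk - zk1‖ := ⟨_, rfl⟩
  have ha2 : a^2 = S + w + 2*q := by
    rw [ha, nsq]
    subst hS hw hq hp hm hv
    simp only [Complex.sub_re, Complex.sub_im, Complex.add_re, Complex.add_im,
      Complex.div_re, Complex.div_im, Complex.normSq_apply, Complex.re_ofNat, Complex.im_ofNat]
    ring
  have hb2 : b^2 = S + w - 2*q := by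
    rw [hb, nsq]
    subst hS hw hq hp hm hv
    simp only [Complex.sub_re, Complex.sub_im, Complex.add_re, Complex.add_im,
      Complex.div_re, Complex.div_im, Complex.normSq_apply, Complex.re_ofNat, Complex.im_ofNat]
    ring
  have hz0ne : z0 ≠ zk1 := by
    intro h
    rw [← h] at hin
    rw [hon0] at hin
    exact lt_irrefl R hin
  have hzkne : zk ≠ zk1 := by
    intro h
    rw [← h] at hin
    rw [honk] at hin
    exact lt_irrefl R hin
  have ha0 : 0 < a := by rw [ha]; exact norm_pos_iff.mpr (sub_ne_zero.mpr hz0ne)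
  have hb0 : 0 < b := by rw [hb]; exact norm_pos_iff.mpr (sub_ne_zero.mpr hzkne)
  have hnum : (z0 - zk1).re*(zk - zk1).re + (z0 - zk1).im*(zk - zk1).im = w - S := by
    subst hS hw hp hm hv
    simp only [Complex.sub_re, Complex.sub_im, Complex.add_re, Complex.add_im,
      Complex.div_re, Complex.div_im, Complex.normSq_apply, Complex.re_ofNat, Complex.im_ofNat]
    ring
  have hcosθ : Real.cos (∠ z0 zk1 zk) = (w - S)/(a*b) := by
    rw [EuclideanGeometry.angle, InnerProductGeometry.cos_angle, vsub_eq_sub, vsub_eq_sub,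
      rinner, hnum, ← ha, ← hb]
  have hsq : Real.sqrt N * (a*b) < R * (S - w) := by
    have hSw : 0 < S - w := by linarith
    have hRHS : 0 < R * (S - w) := by positivity
    have hsN : (Real.sqrt N)^2 = N := Real.sq_sqrt hN0.le
    have h2' : (Real.sqrt N * (a*b))^2 < (R*(S-w))^2 := by
      calc (Real.sqrt N * (a*b))^2 = N * ((S+w)^2 - 4*q^2) := by
            rw [mul_pow, hsN, mul_pow]
            rw [show a^2*b^2 = (S+w)^2 - 4*q^2 by rw [ha2, hb2]; ring]
        _ < (S+N)*(S-w)^2 := hka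
        _ = (R*(S-w))^2 := by rw [mul_pow, ← hSN]
    exact lt_of_pow_lt_pow_left₀ 2 hRHS.le h2'
  have hcoslt : Real.cos (∠ z0 zk1 zk) < Real.cos (π - ∠ z0 zstar zk / 2) := by
    rw [Real.cos_pi_sub, hcoshalf, hcosθ]
    have hd : Real.sqrt N / R * (a*b) < S - w := by
      rw [div_mul_eq_mul_div, div_lt_iff₀ hR]
      nlinarith only [hsq]
    rw [div_lt_iff₀ (by positivity : (0:ℝ) < a*b)]
    nlinarith only [hd, mul_pos ha0 hb0]
  have hfin := Real.cos_lt_cos_of_nonneg_of_le_pi (angle_nonneg z0 zk1 zk)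
      (by linarith only [hγ0] : π - ∠ z0 zstar zk / 2 ≤ π) h2
  linarith only [hfin, hcoslt]
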